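/- The Bayesian DWD link function σ(u) = exp(-V(u)) / (exp(-V(u)) + exp(-V(-u))) is continuously differentiable on ℝ (a smooth link function, comparable to a probit or logit link). -/

import Mathlib

/-- The DWD loss function. -/
noncomputable def V (u : ℝ) : ℝ := if u ≤ 1/2 then 1 - u else 1/(4*u)

/-- The Bayesian DWD link function (class-1 probability of a score `u` under
equal class proportions). -/
noncomputable def dwdLink (u : ℝ) : ℝ :=
  Real.exp (-V u) / (Real.exp (-V u) + Real.exp (-V (-u)))

/-- Candidate derivative of `V`. -/
noncomputable def V' (u : ℝ) : ℝ := if u ≤ 1/2 then -1 else -1/(4*u^2)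

lemma hasDerivAt_inv4 {u : ℝ} (hu : u ≠ 0) :
    HasDerivAt (fun x : ℝ => 1/(4*x)) (-1/(4*u^2)) u := by
  have h4 : (4:ℝ) * u ≠ 0 := by simp [hu]
  have h := ((hasDerivAt_id u).const_mul (4:ℝ)).inv h4
  have heq : -((4:ℝ) * 1) / (4*u)^2 = -1/(4*u^2) := by
    field_simp
  simp only [one_div]
  rw [show (-1:ℝ)/(4*u^2) = -(4*1)/(4*u)^2 from heq.symm]
  exact h

lemma V_eqOn_Ici : ∀ x ∈ Set.Ici (1/2 : ℝ), V x = 1/(4*x) := by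
  intro x hx
  rcases eq_or_lt_of_le (Set.mem_Ici.1 hx) with h | h
  · subst h; simp only [V, if_pos le_rfl]; norm_num
  · simp only [V, if_neg (not_le.2 h)]

lemma hasDerivAt_V (u : ℝ) : HasDerivAt V (V' u) u := by
  rcases lt_trichotomy u (1/2) with h | h | h
  · have hev : V =ᶠ[nhds u] fun x => 1 - x := by
      filter_upwards [Iio_mem_nhds h] with x hx
      simp only [V, if_pos (le_of_lt (Set.mem_Iio.1 hx))]
    have hd : HasDerivAt (fun x : ℝ => 1 - x) (-1) u := by
      simpa using (hasDerivAt_id u).const_sub 1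
    rw [V', if_pos h.le]
    exact hd.congr_of_eventuallyEq hev
  · subst h
    have h1 : HasDerivWithinAt V (-1) (Set.Iic (1/2:ℝ)) (1/2) := by
      have hd : HasDerivWithinAt (fun x : ℝ => 1 - x) (-1) (Set.Iic (1/2:ℝ)) (1/2) := by
        simpa using ((hasDerivAt_id (1/2:ℝ)).const_sub 1).hasDerivWithinAt
      exact hd.congr (fun x hx => by simp only [V, if_pos (Set.mem_Iic.1 hx)])
        (by simp only [V, if_pos le_rfl])
    have h2 : HasDerivWithinAt V (-1) (Set.Ici (1/2:ℝ)) (1/2) := by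
      have hd := (hasDerivAt_inv4 (by norm_num : (1/2:ℝ) ≠ 0)).hasDerivWithinAt
        (s := Set.Ici (1/2:ℝ))
      have he : (-1 : ℝ)/(4*(1/2:ℝ)^2) = -1 := by norm_num
      rw [he] at hd
      exact hd.congr V_eqOn_Ici (V_eqOn_Ici _ (Set.mem_Ici.2 le_rfl))
    have hu := h1.union h2
    rw [Set.Iic_union_Ici] at hu
    rw [V', if_pos le_rfl]
    exact hu.hasDerivAt (by simp)
  · have hev : V =ᶠ[nhds u] fun x => 1/(4*x) := by
      filter_upwards [Ioi_mem_nhds h] with x hx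
      simp only [V, if_neg (not_le.2 (Set.mem_Ioi.1 hx))]
    have hd := hasDerivAt_inv4 (show u ≠ 0 by positivity)
    rw [V', if_neg (not_le.2 h)]
    exact hd.congr_of_eventuallyEq hev

lemma continuous_V' : Continuous V' := by
  have hmax : ∀ x : ℝ, (1/2 : ℝ) ≤ max x (1/2) := fun x => le_max_right _ _
  have hne : ∀ x : ℝ, 4 * (max x (1/2 : ℝ))^2 ≠ 0 := by
    intro x
    have : (0:ℝ) < max x (1/2) := lt_of_lt_of_le (by norm_num) (hmax x)
    positivity
  have hg : Continuous fun x : ℝ => -1/(4*(max x (1/2:ℝ))^2) :=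
    Continuous.div continuous_const (by continuity) hne
  have hfun : V' = fun x : ℝ => if x ≤ 1/2 then -1 else -1/(4*(max x (1/2:ℝ))^2) := by
    funext x
    by_cases hx : x ≤ 1/2
    · simp only [V', if_pos hx]
    · simp only [V', if_neg hx, max_eq_left (le_of_lt (not_le.1 hx))]
  rw [hfun]
  exact Continuous.if_le continuous_const hg continuous_id continuous_const
    (fun x hx => by subst hx; norm_num)

lemma contDiff_V : ContDiff ℝ 1 V := by
  rw [contDiff_one_iff_deriv]
  have hderiv : deriv V = V' := funext fun u => (hasDerivAt_V u).deriv
  exact ⟨fun u => (hasDerivAt_V u).differentiableAt, hderiv ▸ continuous_V'⟩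

/-- the Bayesian DWD link function is continuously
differentiable on `ℝ`. -/
theorem dwdLink_contDiff : ContDiff ℝ 1 dwdLink := by
  have h1 : ContDiff ℝ 1 fun u : ℝ => Real.exp (-V u) :=
    Real.contDiff_exp.comp contDiff_V.neg
  have h2 : ContDiff ℝ 1 fun u : ℝ => Real.exp (-V (-u)) :=
    (Real.contDiff_exp.comp contDiff_V.neg).comp contDiff_neg
  exact h1.div (h1.add h2) fun u => by positivity
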